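/- arXiv:1404.3166 — 3 statements merged into one kernel-verified Lean document; each statement's English description precedes it below -/
import Mathlib

section
/- Let D be an o-stable CRD. With M₁ = {c ∈ min(U) : Φ_D(c) = und}, M₂ = {c ∈ min(U) : Φ_D(c) ∈ {0,1} and c → c' for some c' with Φ_D(c') ≠ Φ_D(c)}, and T = {r ∈ min(U) : (r,p) ∈ R, and either ‖p‖ = 0 or Υ(A) ≠ Υ(B) for some A,B ∈ Λ with r(A) ≠ 0 ≠ p(B)}, we have T ⊆ M₁ ∪ M₂. -/
/-- Size of a configuration: total number of molecules. -/
def size {Λ : Type*} [Fintype Λ] (c : Λ → ℕ) : ℕ := ∑ i, c i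

/-- One reaction step of a CRN with reaction set `R`. -/
def Step {Λ : Type*} (R : Set ((Λ → ℕ) × (Λ → ℕ))) (c c' : Λ → ℕ) : Prop :=
  ∃ rp ∈ R, rp.1 ≤ c ∧ c' = c - rp.1 + rp.2

/-- Reachability: reflexive-transitive closure of one-step reactions. -/
def Reach {Λ : Type*} (R : Set ((Λ → ℕ) × (Λ → ℕ))) : (Λ → ℕ) → (Λ → ℕ) → Prop :=
  Relation.ReflTransGen (Step R)

open Classical in
/-- Output function Φ_D : `some true` = 1 (only yes voters present),
`some false` = 0 (only no voters present), `none` = und. -/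
noncomputable def Phi {Λ : Type*} (Υ : Λ → Bool) (x : Λ → ℕ) : Option Bool :=
  if (∃ A, x A ≠ 0 ∧ Υ A = true) ∧ ¬ (∃ A, x A ≠ 0 ∧ Υ A = false) then some true
  else if (∃ A, x A ≠ 0 ∧ Υ A = false) ∧ ¬ (∃ A, x A ≠ 0 ∧ Υ A = true) then some false
  else none

/-- Output stable configuration. -/
def OStable {Λ : Type*} (R : Set ((Λ → ℕ) × (Λ → ℕ))) (Υ : Λ → Bool) (c : Λ → ℕ) : Prop :=
  (Phi Υ c).isSome ∧ ∀ c', Reach R c c' → Phi Υ c' = Phi Υ c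

/-- Totally stable configuration. -/
def TStable {Λ : Type*} (R : Set ((Λ → ℕ) × (Λ → ℕ))) (Υ : Λ → Bool) (c : Λ → ℕ) : Prop :=
  (Phi Υ c).isSome ∧ ∀ c', Reach R c c' → c' = c

/-- Output unstable configuration: nonzero and not o-stable. -/
def Unstable {Λ : Type*} (R : Set ((Λ → ℕ) × (Λ → ℕ))) (Υ : Λ → Bool) (c : Λ → ℕ) : Prop :=
  c ≠ 0 ∧ ¬ OStable R Υ c

/-- The set U of output unstable configurations. -/
def UnstableSet {Λ : Type*} (R : Set ((Λ → ℕ) × (Λ → ℕ))) (Υ : Λ → Bool) : Set (Λ → ℕ) :=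
  {c | Unstable R Υ c}

/-- min(U): the ≤-minimal output unstable configurations. -/
def minU {Λ : Type*} (R : Set ((Λ → ℕ) × (Λ → ℕ))) (Υ : Λ → Bool) : Set (Λ → ℕ) :=
  {c | Unstable R Υ c ∧ ∀ c', Unstable R Υ c' → c' ≤ c → c' = c}

/-- The relation ↪ on min(U). -/
def Hook {Λ : Type*} (R : Set ((Λ → ℕ) × (Λ → ℕ))) (Υ : Λ → Bool) (c c' : Λ → ℕ) : Prop :=
  c ∈ minU R Υ ∧ c' ∈ minU R Υ ∧ ∃ rp ∈ R, ∃ b : Λ → ℕ,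
    b ≤ rp.2 ∧ b ≠ rp.2 ∧ rp.1 ≤ c ∧ c' + b = c - rp.1 + rp.2

/-- D = (Λ,R,Inp,Υ) is an o-stable CRD: it o-stably decides some function φ
on the initial configurations (nonzero, supported on the input species Inp). -/
def IsOStableCRD {Λ : Type*} (R : Set ((Λ → ℕ) × (Λ → ℕ))) (Inp : Set Λ) (Υ : Λ → Bool) : Prop :=
  ∃ φ : (Λ → ℕ) → Bool, ∀ c : Λ → ℕ, c ≠ 0 → (∀ A ∉ Inp, c A = 0) →
    ∀ c', Reach R c c' → ∃ c'', Reach R c' c'' ∧ OStable R Υ c'' ∧ Phi Υ c'' = some (φ c)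

lemma phi_some_mem {Λ : Type*} (Υ : Λ → Bool) (x : Λ → ℕ) (b : Bool)
    (h : Phi Υ x = some b) (A : Λ) (hA : x A ≠ 0) : Υ A = b := by
  unfold Phi at h
  split_ifs at h with h1 h2
  · simp only [Option.some.injEq] at h
    subst h
    by_contra hne
    exact h1.2 ⟨A, hA, by simpa using hne⟩
  · simp only [Option.some.injEq] at h
    subst h
    by_contra hne
    exact h2.2 ⟨A, hA, by simpa using hne⟩

lemma phi_none_of_zero {Λ : Type*} (Υ : Λ → Bool) (x : Λ → ℕ)
    (h : ∀ A, x A = 0) : Phi Υ x = none := by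
  unfold Phi
  have : ¬ ∃ A, x A ≠ 0 ∧ Υ A = true := by
    rintro ⟨A, hA, -⟩; exact hA (h A)
  rw [if_neg (fun hc => this hc.1), if_neg]
  rintro ⟨⟨A, hA, -⟩, -⟩; exact hA (h A)

lemma phi_ne_of_voter {Λ : Type*} (Υ : Λ → Bool) (x : Λ → ℕ) (b : Bool) (B : Λ)
    (hB : x B ≠ 0) (hv : Υ B = !b) : Phi Υ x ≠ some b := by
  intro h
  have := phi_some_mem Υ x b h B hB
  rw [hv] at this
  cases b <;> simp at this

/-- T ⊆ M₁ ∪ M₂. -/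
theorem stmt7 {Λ : Type*} [Fintype Λ] (R : Set ((Λ → ℕ) × (Λ → ℕ))) (Inp : Set Λ)
    (Υ : Λ → Bool) (hD : IsOStableCRD R Inp Υ) :
    {r ∈ minU R Υ | ∃ p : Λ → ℕ, (r, p) ∈ R ∧
        (size p = 0 ∨ ∃ A B : Λ, Υ A ≠ Υ B ∧ r A ≠ 0 ∧ p B ≠ 0)} ⊆
      {c ∈ minU R Υ | Phi Υ c = none} ∪
      {c ∈ minU R Υ | (Phi Υ c).isSome ∧ ∃ c', Step R c c' ∧ Phi Υ c' ≠ Phi Υ c} := by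
  rintro r ⟨hrmin, p, hRp, hcase⟩
  cases h : Phi Υ r with
  | none => exact Or.inl ⟨hrmin, h⟩
  | some b =>
    right
    refine ⟨hrmin, by rw [h]; rfl, p, ⟨(r, p), hRp, le_rfl, by funext i; simp⟩, ?_⟩
    rw [h]
    rcases hcase with hsz | ⟨A, B, hAB, hA, hB⟩
    · have hp0 : ∀ A, p A = 0 := by
        intro A
        have := Finset.sum_eq_zero_iff.mp hsz
        exact this A (Finset.mem_univ A)
      rw [phi_none_of_zero Υ p hp0]; simp
    · have hΥA : Υ A = b := phi_some_mem Υ r b h A hA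
      refine phi_ne_of_voter Υ p b B hB ?_
      subst hΥA
      cases hΥB : Υ B <;> simp_all
end

section
/- Let D be an o-stable CRD in which every reaction (r,p) satisfies 2 = ‖r‖ ≥ ‖p‖. If c ↪ c' (for c, c' ∈ min(U)), then ‖c'‖ = ‖c‖ or ‖c'‖ = ‖c‖ − 1. -/
/-- if every reaction (r,p) has 2 = ‖r‖ ≥ ‖p‖, then ↪ preserves
the size or decreases it by exactly one. -/
theorem stmt9 {Λ : Type*} [Fintype Λ] (R : Set ((Λ → ℕ) × (Λ → ℕ))) (Inp : Set Λ)
    (Υ : Λ → Bool) (hD : IsOStableCRD R Inp Υ)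
    (hR : ∀ rp ∈ R, size rp.1 = 2 ∧ size rp.2 ≤ 2)
    (c c' : Λ → ℕ) (h : Hook R Υ c c') :
    size c' = size c ∨ size c' = size c - 1 := by
  obtain ⟨-, -, rp, hrp, b, hbp, hbne, hrc, heq⟩ := h
  obtain ⟨hr2, hp2⟩ := hR rp hrp
  have hadd : ∀ x y : Λ → ℕ, size (x + y) = size x + size y := by
    intro x y; simp [size, Finset.sum_add_distrib]
  have hmono : ∀ x y : Λ → ℕ, x ≤ y → size x ≤ size y := by
    intro x y hxy; exact Finset.sum_le_sum fun i _ => hxy i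
  have hsub : size (c - rp.1) + size rp.1 = size c := by
    rw [← hadd]
    congr 1
    funext i
    exact tsub_add_cancel_of_le (hrc i)
  have hkey : size c' + size b = size (c - rp.1) + size rp.2 := by
    rw [← hadd, ← hadd, heq]
  have hblt : size b < size rp.2 := by
    apply Finset.sum_lt_sum (fun i _ => hbp i)
    by_contra hcon
    push_neg at hcon
    exact hbne (funext fun i => le_antisymm (hbp i) (hcon i (Finset.mem_univ i)))
  have hrc' : size rp.1 ≤ size c := hmono _ _ hrc
  omega
end

section
/- Let D be an o-stable bimolecular CRD. If x ∈ min(U) with ‖x‖ = k, then for every l with 2 ≤ l ≤ k there exists y ∈ min(U) with ‖y‖ = l. Consequently, min(U) cannot equal the full antichain C_{=k} of all configurations of size k for any k ≥ 3. -/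
section Helpers

variable {Λ : Type*} [Fintype Λ] {R : Set ((Λ → ℕ) × (Λ → ℕ))} {Υ : Λ → Bool}

lemma size_mono {c d : Λ → ℕ} (h : c ≤ d) : size c ≤ size d :=
  Finset.sum_le_sum fun i _ => h i

lemma size_add (c d : Λ → ℕ) : size (c + d) = size c + size d := by
  simp [size, Finset.sum_add_distrib]

lemma size_eq_zero_iff {c : Λ → ℕ} : size c = 0 ↔ c = 0 := by
  simp [size, Finset.sum_eq_zero_iff, funext_iff]

lemma exists_present {c : Λ → ℕ} (h : c ≠ 0) : ∃ A, c A ≠ 0 := by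
  by_contra hno; push_neg at hno; exact h (funext fun i => hno i)

lemma eq_of_le_of_size_le {c d : Λ → ℕ} (h : c ≤ d) (hs : size d ≤ size c) : c = d := by
  by_contra hne
  have hlt : ∃ i, c i < d i := by
    by_contra hno; push_neg at hno
    exact hne (funext fun i => le_antisymm (h i) (hno i))
  obtain ⟨i, hi⟩ := hlt
  have : size c < size d := Finset.sum_lt_sum (fun j _ => h j) ⟨i, Finset.mem_univ i, hi⟩
  omega

lemma size_sub_add {c r p : Λ → ℕ} (h : r ≤ c) :
    size (c - r + p) = size c - size r + size p := by
  have h1 : size (c - r + p) + size r = size c + size p := by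
    simp only [size, ← Finset.sum_add_distrib]
    refine Finset.sum_congr rfl fun i _ => ?_
    have hi : r i ≤ c i := h i
    simp only [Pi.add_apply, Pi.sub_apply]
    omega
  have h2 : size r ≤ size c := size_mono h
  omega

lemma phi_some_forall {x : Λ → ℕ} {b : Bool} (h : Phi Υ x = some b) :
    ∀ A, x A ≠ 0 → Υ A = b := by
  intro A hA
  unfold Phi at h
  split_ifs at h with h1 h2
  · injection h with h'; subst h'
    by_contra hne
    exact h1.2 ⟨A, hA, by simpa using hne⟩
  · injection h with h'; subst h'
    by_contra hne
    exact h2.2 ⟨A, hA, by simpa using hne⟩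

lemma phi_some_exists {x : Λ → ℕ} {b : Bool} (h : Phi Υ x = some b) :
    ∃ A, x A ≠ 0 ∧ Υ A = b := by
  unfold Phi at h
  split_ifs at h with h1 h2
  · injection h with h'; subst h'; exact h1.1
  · injection h with h'; subst h'; exact h2.1

lemma phi_eq_some_of {x : Λ → ℕ} {b : Bool} (hex : ∃ A, x A ≠ 0)
    (hall : ∀ A, x A ≠ 0 → Υ A = b) : Phi Υ x = some b := by
  obtain ⟨A, hA⟩ := hex
  have hb := hall A hA
  unfold Phi
  split_ifs with h1 h2
  · obtain ⟨⟨B, hB, hBt⟩, -⟩ := h1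
    have hB' := hall B hB
    cases b
    · rw [hB'] at hBt; cases hBt
    · rfl
  · obtain ⟨⟨B, hB, hBf⟩, -⟩ := h2
    cases b
    · rfl
    · rw [hall B hB] at hBf; cases hBf
  · exfalso
    cases b
    · refine h2 ⟨⟨A, hA, hb⟩, ?_⟩
      rintro ⟨B, hB, hBt⟩
      rw [hall B hB] at hBt; cases hBt
    · refine h1 ⟨⟨A, hA, hb⟩, ?_⟩
      rintro ⟨B, hB, hBf⟩
      rw [hall B hB] at hBf; cases hBf

lemma phi_none_both {x : Λ → ℕ} (h : Phi Υ x = none) (hx : x ≠ 0) :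
    (∃ A, x A ≠ 0 ∧ Υ A = true) ∧ (∃ B, x B ≠ 0 ∧ Υ B = false) := by
  obtain ⟨A, hA⟩ := exists_present hx
  unfold Phi at h
  split_ifs at h with h1 h2
  cases hv : Υ A with
  | true =>
    refine ⟨⟨A, hA, hv⟩, ?_⟩
    by_contra hno
    exact h1 ⟨⟨A, hA, hv⟩, hno⟩
  | false =>
    refine ⟨?_, ⟨A, hA, hv⟩⟩
    by_contra hyes
    exact h2 ⟨⟨A, hA, hv⟩, hyes⟩

lemma phi_none_of_both {x : Λ → ℕ} (h1 : ∃ A, x A ≠ 0 ∧ Υ A = true)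
    (h2 : ∃ B, x B ≠ 0 ∧ Υ B = false) : Phi Υ x = none := by
  unfold Phi
  split_ifs with ha hb
  · exact absurd h2 ha.2
  · exact absurd h1 hb.2
  · rfl

lemma step_size (hbi : ∀ rp ∈ R, size rp.1 = 2 ∧ size rp.2 = 2) {c c' : Λ → ℕ}
    (h : Step R c c') : size c' = size c := by
  obtain ⟨rp, hR, hle, rfl⟩ := h
  obtain ⟨h1, h2⟩ := hbi rp hR
  have hs := size_mono hle
  rw [size_sub_add hle, h1, h2]
  omega

lemma reach_size (hbi : ∀ rp ∈ R, size rp.1 = 2 ∧ size rp.2 = 2) {c c' : Λ → ℕ}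
    (h : Reach R c c') : size c' = size c := by
  induction h with
  | refl => rfl
  | tail _ hstep ih => rw [step_size hbi hstep, ih]

lemma step_add {c c' : Λ → ℕ} (h : Step R c c') (e : Λ → ℕ) : Step R (c + e) (c' + e) := by
  obtain ⟨rp, hR, hle, rfl⟩ := h
  refine ⟨rp, hR, fun i => ?_, ?_⟩
  · have hi : rp.1 i ≤ c i := hle i
    simp only [Pi.add_apply]
    omega
  · funext i
    have hi : rp.1 i ≤ c i := hle i
    simp only [Pi.add_apply, Pi.sub_apply]
    omega

lemma reach_add {c c' : Λ → ℕ} (h : Reach R c c') (e : Λ → ℕ) :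
    Reach R (c + e) (c' + e) := by
  induction h with
  | refl => exact Relation.ReflTransGen.refl
  | tail _ hstep ih => exact ih.tail (step_add hstep e)

lemma unstable_of_phi_none {x : Λ → ℕ} (hx : x ≠ 0) (h : Phi Υ x = none) :
    Unstable R Υ x := by
  refine ⟨hx, fun hO => ?_⟩
  have := hO.1
  rw [h] at this
  simp at this

lemma unstable_rev {w u : Λ → ℕ} (hw : w ≠ 0) (hr : Reach R w u)
    (hu : Unstable R Υ u) : Unstable R Υ w := by
  refine ⟨hw, fun hO => hu.2 ⟨?_, ?_⟩⟩
  · rw [hO.2 u hr]; exact hO.1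
  · intro u' hu'
    rw [hO.2 u' (hr.trans hu'), hO.2 u hr]

lemma unstable_up (hbi : ∀ rp ∈ R, size rp.1 = 2 ∧ size rp.2 = 2) {c d : Λ → ℕ}
    (hc : Unstable R Υ c) (hcd : c ≤ d) : Unstable R Υ d := by
  have hd0 : d ≠ 0 := by
    intro h
    apply hc.1
    funext i
    have hi : c i ≤ d i := hcd i
    rw [h] at hi
    simpa using hi
  refine ⟨hd0, fun hOd => ?_⟩
  obtain ⟨bd, hbd⟩ := Option.isSome_iff_exists.mp hOd.1
  cases hphic : Phi Υ c with
  | none =>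
    obtain ⟨⟨A, hA, hAt⟩, ⟨B, hB, hBf⟩⟩ := phi_none_both hphic hc.1
    have hdA : d A ≠ 0 := by have h2 : c A ≤ d A := hcd A; omega
    have hdB : d B ≠ 0 := by have h2 : c B ≤ d B := hcd B; omega
    rw [phi_none_of_both ⟨A, hdA, hAt⟩ ⟨B, hdB, hBf⟩] at hbd
    cases hbd
  | some b' =>
    have hcsome : (Phi Υ c).isSome := by rw [hphic]; rfl
    have hex : ∃ c', Reach R c c' ∧ Phi Υ c' ≠ Phi Υ c := by
      by_contra hno; push_neg at hno
      exact hc.2 ⟨hcsome, fun c' h => hno c' h⟩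
    obtain ⟨c', hrc, hnec⟩ := hex
    obtain ⟨A, hA, hAv⟩ := phi_some_exists hphic
    have hdA : d A ≠ 0 := by have h2 : c A ≤ d A := hcd A; omega
    have hbb : b' = bd := by rw [← hAv, phi_some_forall hbd A hdA]
    subst hbb
    have hde : d = c + (d - c) := by
      funext i
      have hi : c i ≤ d i := hcd i
      simp only [Pi.add_apply, Pi.sub_apply]
      omega
    have hreach : Reach R d (c' + (d - c)) := by
      have h := reach_add hrc (d - c)
      rwa [← hde] at h
    have hphid : Phi Υ (c' + (d - c)) = some b' := by rw [hOd.2 _ hreach, hbd]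
    have hc'0 : c' ≠ 0 := by
      intro h
      have hsz := reach_size hbi hrc
      rw [h] at hsz
      have : size c = 0 := by rw [← hsz]; exact size_eq_zero_iff.mpr rfl
      exact hc.1 (size_eq_zero_iff.mp this)
    have : Phi Υ c' = some b' := by
      apply phi_eq_some_of (exists_present hc'0)
      intro B hB
      apply phi_some_forall hphid B
      simp only [Pi.add_apply]
      omega
    rw [this, hphic] at hnec
    exact hnec rfl

lemma exists_minU_le : ∀ k (c : Λ → ℕ), size c ≤ k → Unstable R Υ c →
    ∃ z ∈ minU R Υ, z ≤ c := by
  intro k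
  induction k with
  | zero =>
    intro c hc hu
    exact absurd (size_eq_zero_iff.mp (Nat.le_zero.mp hc)) hu.1
  | succ n ih =>
    intro c hc hu
    by_cases hmin : ∀ c', Unstable R Υ c' → c' ≤ c → c' = c
    · exact ⟨c, ⟨hu, hmin⟩, le_refl c⟩
    · push_neg at hmin
      obtain ⟨c', hc'u, hc'le, hne⟩ := hmin
      have hlt : size c' < size c :=
        lt_of_le_of_ne (size_mono hc'le) fun h => hne (eq_of_le_of_size_le hc'le h.ge)
      obtain ⟨z, hz, hzle⟩ := ih c' (by omega) hc'u
      exact ⟨z, hz, hzle.trans hc'le⟩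

lemma exists_minU_le' {c : Λ → ℕ} (hc : Unstable R Υ c) : ∃ z ∈ minU R Υ, z ≤ c :=
  exists_minU_le (size c) c le_rfl hc

lemma minU_size_ge_two (hbi : ∀ rp ∈ R, size rp.1 = 2 ∧ size rp.2 = 2) {x : Λ → ℕ}
    (hx : x ∈ minU R Υ) : 2 ≤ size x := by
  classical
  by_contra hlt
  push_neg at hlt
  have hx0 : x ≠ 0 := hx.1.1
  have h1 : size x = 1 := by
    have : size x ≠ 0 := fun h => hx0 (size_eq_zero_iff.mp h)
    omega
  have hnostep : ∀ c', ¬ Step R x c' := by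
    intro c' h
    obtain ⟨rp, hR, hle, -⟩ := h
    have := size_mono hle
    have := (hbi rp hR).1
    omega
  have hreach : ∀ c', Reach R x c' → c' = x := by
    intro c' h
    induction h with
    | refl => rfl
    | tail h1 hstep ih =>
      exfalso
      rw [ih] at hstep
      exact hnostep _ hstep
  obtain ⟨A, hA⟩ := exists_present hx0
  have huniq : ∀ B, x B ≠ 0 → Υ B = Υ A := by
    intro B hB
    by_cases hne : B = A
    · rw [hne]
    · exfalso
      have hsum : x A + x B ≤ size x := by
        have hsub : ({A, B} : Finset Λ).sum x ≤ Finset.univ.sum x :=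
          Finset.sum_le_sum_of_subset (Finset.subset_univ _)
        rwa [Finset.sum_pair (fun h => hne h.symm)] at hsub
      omega
  have hsome : Phi Υ x = some (Υ A) := phi_eq_some_of ⟨A, hA⟩ huniq
  exact hx.1.2 ⟨by rw [hsome]; rfl, fun c' h => by rw [hreach c' h]⟩

lemma two_voter_lemma {c : Λ → ℕ} {A B : Λ} (hA : c A ≠ 0) (hB : c B ≠ 0)
    (hAt : Υ A = true) (hBf : Υ B = false) :
    ∃ y : Λ → ℕ, y ≤ c ∧ Unstable R Υ y ∧ size y = 2 := by
  classical
  have hAB : A ≠ B := fun h => by rw [h, hBf] at hAt; cases hAt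
  refine ⟨fun i => (if i = A then 1 else 0) + (if i = B then 1 else 0), ?_, ?_, ?_⟩
  · intro i
    show (if i = A then 1 else 0) + (if i = B then 1 else 0) ≤ c i
    by_cases hiA : i = A
    · have hiB : ¬ i = B := by rw [hiA]; exact hAB
      rw [if_pos hiA, if_neg hiB]
      have hci : c i ≠ 0 := by rw [hiA]; exact hA
      omega
    · by_cases hiB : i = B
      · rw [if_neg hiA, if_pos hiB]
        have hci : c i ≠ 0 := by rw [hiB]; exact hB
        omega
      · rw [if_neg hiA, if_neg hiB]
        omega
  · apply unstable_of_phi_none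
    · intro h0
      have := congrFun h0 A
      simp [hAB] at this
    · apply phi_none_of_both
      · exact ⟨A, by simp [hAB], hAt⟩
      · exact ⟨B, by simp [Ne.symm hAB], hBf⟩
  · simp [size, Finset.sum_add_distrib, Finset.sum_ite_eq, Finset.sum_ite_eq']

lemma key_bound (hbi : ∀ rp ∈ R, size rp.1 = 2 ∧ size rp.2 = 2) {m r p z : Λ → ℕ}
    (hm : m ∈ minU R Υ) (hR : (r, p) ∈ R) (hr : r ≤ m) (hz : z ∈ minU R Υ)
    (hzle : z ≤ m - r + p) : size m - 1 ≤ size z := by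
  obtain ⟨hr2, hp2⟩ := hbi (r, p) hR
  set w : Λ → ℕ := (z - p) + r with hw
  have hwle : w ≤ m := by
    intro i
    have h1 : z i ≤ (m - r + p) i := hzle i
    have h2 : r i ≤ m i := hr i
    simp only [Pi.add_apply, Pi.sub_apply] at h1
    show (z - p + r) i ≤ m i
    simp only [Pi.add_apply, Pi.sub_apply]
    omega
  have hstep : Step R w (w - r + p) := by
    refine ⟨(r, p), hR, fun i => ?_, rfl⟩
    show r i ≤ (z - p + r) i
    simp only [Pi.add_apply]
    omega
  have hzw : z ≤ w - r + p := by
    intro i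
    show z i ≤ (z - p + r - r + p) i
    simp only [Pi.add_apply, Pi.sub_apply]
    omega
  have hw'u : Unstable R Υ (w - r + p) := unstable_up hbi hz.1 hzw
  have hsw : size w = size (z - p) + 2 := by rw [hw, size_add, hr2]
  have hw0 : w ≠ 0 := by
    intro h0
    have : size w = 0 := by rw [h0]; exact size_eq_zero_iff.mpr rfl
    omega
  have hwu : Unstable R Υ w :=
    unstable_rev hw0 (Relation.ReflTransGen.single hstep) hw'u
  have hweq : w = m := hm.2 w hwu hwle
  have hzp_le : size (z - p) ≤ size z := size_mono fun i => Nat.sub_le _ _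
  have hsm : size m = size (z - p) + 2 := by rw [← hweq, hsw]
  by_cases hcase : size (z - p) = size z
  · exfalso
    have hzz : z - p = z := eq_of_le_of_size_le (fun i => Nat.sub_le _ _) hcase.ge
    have hzm : z + r = m := by rw [← hweq, hw, hzz]
    have hzlem : z ≤ m := by
      intro i
      show z i ≤ m i
      rw [← hzm]
      simp only [Pi.add_apply]
      omega
    have hzm' : z = m := hm.2 z hz.1 hzlem
    have h1 : size z + size r = size m := by rw [← size_add, hzm]
    have h2 : size z = size m := by rw [hzm']
    omega
  · have : size (z - p) < size z := lt_of_le_of_ne hzp_le hcase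
    omega

lemma inner_lemma (hbi : ∀ rp ∈ R, size rp.1 = 2 ∧ size rp.2 = 2) {b : Bool}
    {c'' : Λ → ℕ} (hc'' : Phi Υ c'' ≠ some b) {x : Λ → ℕ}
    (hreach : Reach R x c'') :
    x ∈ minU R Υ → 3 ≤ size x → Phi Υ x = some b →
      ∃ z ∈ minU R Υ, size z = size x - 1 := by
  have hreach' : Relation.ReflTransGen (Step R) x c'' := hreach
  clear hreach
  induction hreach' using Relation.ReflTransGen.head_induction_on with
  | refl => intro _ _ hphi; exact absurd hphi hc''
  | @head a c hstep htail ih =>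
    intro ha h3 hphia
    obtain ⟨⟨r, p⟩, hR, hle0, hceq0⟩ := hstep
    obtain ⟨hr20, hp20⟩ := hbi (r, p) hR
    have hle : r ≤ a := hle0
    have hceq : c = a - r + p := hceq0
    have hr2 : size r = 2 := hr20
    have hp2 : size p = 2 := hp20
    have hsizec : size c = size a := by
      rw [hceq, size_sub_add hle, hr2, hp2]
      have := size_mono hle
      omega
    have hkey : ∀ z ∈ minU R Υ, z ≤ c → size a - 1 ≤ size z := by
      intro z hz hzc
      have hzc' : z ≤ a - r + p := by rwa [hceq] at hzc
      exact key_bound hbi ha hR hle hz hzc'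
    have hc0 : c ≠ 0 := by
      intro h0
      rw [h0] at hsizec
      have : size (0 : Λ → ℕ) = 0 := size_eq_zero_iff.mpr rfl
      omega
    cases hphic : Phi Υ c with
    | none =>
      obtain ⟨⟨A, hA, hAt⟩, ⟨B, hB, hBf⟩⟩ := phi_none_both hphic hc0
      obtain ⟨y, hyle, hyu, hys⟩ := two_voter_lemma (R := R) hA hB hAt hBf
      obtain ⟨z, hzmin, hzley⟩ := exists_minU_le' hyu
      have hzc : z ≤ c := hzley.trans hyle
      have h2z := minU_size_ge_two hbi hzmin
      have hzy := size_mono hzley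
      have hk := hkey z hzmin hzc
      exact ⟨z, hzmin, by omega⟩
    | some b'' =>
      by_cases hbb : b'' = b
      · subst hbb
        have hcu : Unstable R Υ c := by
          refine ⟨hc0, fun hO => ?_⟩
          have := hO.2 c'' htail
          rw [hphic] at this
          exact hc'' this
        obtain ⟨z, hzmin, hzle⟩ := exists_minU_le' hcu
        have hlow := hkey z hzmin hzle
        have hhigh : size z ≤ size a := by rw [← hsizec]; exact size_mono hzle
        by_cases hzt : size z = size a
        · have hzc : z = c := eq_of_le_of_size_le hzle (by omega)
          have hcm : c ∈ minU R Υ := hzc ▸ hzmin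
          obtain ⟨z', hz', hz's⟩ := ih hcm (by omega) hphic
          exact ⟨z', hz', by rw [hz's]; omega⟩
        · exact ⟨z, hzmin, by omega⟩
      · exfalso
        have hsub : size (a - r) + 2 = size a := by
          rw [← hr2, ← size_add]
          congr 1
          funext i
          have hi : r i ≤ a i := hle i
          simp only [Pi.add_apply, Pi.sub_apply]
          omega
        have har0 : a - r ≠ 0 := by
          intro h0
          have : size (a - r) = 0 := by rw [h0]; exact size_eq_zero_iff.mpr rfl
          omega
        obtain ⟨A, hA⟩ := exists_present har0
        have hA' : a A - r A ≠ 0 := hA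
        have hcA : c A ≠ 0 := by
          rw [hceq]
          show a A - r A + p A ≠ 0
          omega
        have h1 : Υ A = b'' := phi_some_forall hphic A hcA
        have haA : a A ≠ 0 := by omega
        have h2 : Υ A = b := phi_some_forall hphia A haA
        exact hbb (by rw [← h1, h2])

lemma main_lemma (hbi : ∀ rp ∈ R, size rp.1 = 2 ∧ size rp.2 = 2) :
    ∀ k, ∀ x ∈ minU R Υ, size x = k → ∀ l, 2 ≤ l → l ≤ k →
      ∃ y ∈ minU R Υ, size y = l := by
  intro k
  induction k using Nat.strong_induction_on with
  | _ k ih =>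
    intro x hx hxk l hl2 hlk
    by_cases hlk' : l = k
    · exact ⟨x, hx, by omega⟩
    have h3 : 3 ≤ k := by omega
    cases hphi : Phi Υ x with
    | none =>
      exfalso
      obtain ⟨⟨A, hA, hAt⟩, ⟨B, hB, hBf⟩⟩ := phi_none_both hphi hx.1.1
      obtain ⟨y, hyle, hyu, hys⟩ := two_voter_lemma (R := R) hA hB hAt hBf
      have := hx.2 y hyu hyle
      rw [← this] at hxk
      omega
    | some b =>
      have hex : ∃ c', Reach R x c' ∧ Phi Υ c' ≠ some b := by
        by_contra hno; push_neg at hno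
        refine hx.1.2 ⟨by rw [hphi]; rfl, fun c' h => ?_⟩
        rw [hno c' h, hphi]
      obtain ⟨c', hrc, hnec⟩ := hex
      obtain ⟨z, hz, hzs⟩ := inner_lemma hbi hnec hrc hx (by omega) hphi
      exact ih (k - 1) (by omega) z hz (by omega) l hl2 (by omega)

end Helpers

/-- for an o-stable bimolecular CRD, min(U) contains elements of every
size l with 2 ≤ l ≤ k whenever it contains one of size k; consequently min(U) is not
the full antichain of configurations of any fixed size k ≥ 3. -/
theorem stmt15 {Λ : Type*} [Fintype Λ] [Nonempty Λ] (R : Set ((Λ → ℕ) × (Λ → ℕ)))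
    (Inp : Set Λ) (Υ : Λ → Bool) (hD : IsOStableCRD R Inp Υ)
    (hbi : ∀ rp ∈ R, size rp.1 = 2 ∧ size rp.2 = 2) :
    (∀ x ∈ minU R Υ, ∀ l, 2 ≤ l → l ≤ size x → ∃ y ∈ minU R Υ, size y = l) ∧
      ∀ k, 3 ≤ k → minU R Υ ≠ {c : Λ → ℕ | size c = k} := by
  have hpart1 : ∀ x ∈ minU R Υ, ∀ l, 2 ≤ l → l ≤ size x → ∃ y ∈ minU R Υ, size y = l :=
    fun x hx l hl2 hlk => main_lemma hbi (size x) x hx rfl l hl2 hlk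
  refine ⟨hpart1, ?_⟩
  intro k hk heq
  classical
  obtain ⟨A⟩ := ‹Nonempty Λ›
  set c0 : Λ → ℕ := fun i => if i = A then k else 0 with hc0
  have hs : size c0 = k := by simp [hc0, size, Finset.sum_ite_eq, Finset.sum_ite_eq']
  have hc0m : c0 ∈ minU R Υ := by rw [heq]; exact hs
  obtain ⟨y, hy, hys⟩ := hpart1 c0 hc0m 2 le_rfl (by omega)
  rw [heq] at hy
  have : size y = k := hy
  omega
end
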